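/- arXiv:2212.02727 — 4 statements merged into one kernel-verified Lean document; each statement's English description precedes it below -/
import Mathlib

section
/- Let Ω be a nonempty convex subset of a normed space X and let x̄ ∈ Ω. Then the contingent (Bouligand) tangent cone to Ω at x̄ is lower semicontinuous along Ω in the sense that T(x̄; Ω) ⊆ s-liminf_{x →_Ω x̄} T(x; Ω): for every v ∈ T(x̄; Ω) and every sequence x_k ∈ Ω with x_k → x̄, there exist v_k ∈ T(x_k; Ω) with v_k → v. -/
open Filter Topology

/-- The Bouligand contingent cone to `Ω` at `x`. -/
def Contingent {X : Type*} [NormedAddCommGroup X] [NormedSpace ℝ X]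
    (Ω : Set X) (x : X) : Set X :=
  {v | ∃ t : ℕ → ℝ, ∃ w : ℕ → X, (∀ k, 0 < t k) ∧ Tendsto t atTop (𝓝 0) ∧
    Tendsto w atTop (𝓝 v) ∧ ∀ k, x + t k • w k ∈ Ω}

/-- For a nonempty convex set `Ω`, the contingent cone is lower semicontinuous along `Ω`:
`T(xb;Ω) ⊆ s-liminf_{x →_Ω xb} T(x;Ω)`. -/
theorem contingent_cone_liminf {X : Type*} [NormedAddCommGroup X] [NormedSpace ℝ X]
    {Ω : Set X} (hconv : Convex ℝ Ω) (hne : Ω.Nonempty) {xb : X} (hxb : xb ∈ Ω)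
    {v : X} (hv : v ∈ Contingent Ω xb) (x : ℕ → X) (hx : ∀ k, x k ∈ Ω)
    (hlim : Tendsto x atTop (𝓝 xb)) :
    ∃ vk : ℕ → X, (∀ k, vk k ∈ Contingent Ω (x k)) ∧ Tendsto vk atTop (𝓝 v) := by
  classical
  obtain ⟨t, w, ht0, htlim, hwlim, hmem⟩ := hv
  set ε : ℕ → ℝ := fun k => ‖x k - xb‖ with hε
  have hεnn : ∀ k, 0 ≤ ε k := fun k => norm_nonneg _
  have hεlim : Tendsto ε atTop (𝓝 0) := by
    simpa [ε] using (tendsto_iff_norm_sub_tendsto_zero.mp hlim)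
  set P : ℕ → ℕ → Prop := fun k m => ε k * m ≤ t m with hP
  have hP0 : ∀ k, P k 0 := by
    intro k; simp only [P, Nat.cast_zero, mul_zero]; exact (ht0 0).le
  set m : ℕ → ℕ := fun k => Nat.findGreatest (P k) k with hm
  have hPm : ∀ k, P k (m k) := fun k =>
    Nat.findGreatest_spec (Nat.zero_le k) (hP0 k)
  have hmtop : Tendsto m atTop atTop := by
    rw [tendsto_atTop]
    intro M
    have hpos : (0 : ℝ) < t M / (M + 1) := div_pos (ht0 M) (by positivity)
    have h1 : ∀ᶠ k in atTop, ε k ≤ t M / (M + 1) :=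
      hεlim.eventually (eventually_le_nhds hpos)
    filter_upwards [h1, eventually_ge_atTop M] with k hk hkM
    refine Nat.le_findGreatest hkM ?_
    have : ε k * M ≤ (t M / (M + 1)) * M := by
      apply mul_le_mul_of_nonneg_right hk (by positivity)
    refine this.trans ?_
    rw [div_mul_eq_mul_div]
    apply div_le_of_le_mul₀ (by positivity) (ht0 M).le
    nlinarith [(ht0 M).le, (Nat.cast_nonneg M : (0:ℝ) ≤ M)]
  -- second term tends to zero
  have hsec : Tendsto (fun k => (t (m k))⁻¹ • (xb - x k)) atTop (𝓝 (0 : X)) := by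
    refine squeeze_zero_norm' (a := fun k => 1 / (m k : ℝ)) ?_ (tendsto_one_div_atTop_nhds_zero_nat.comp hmtop)
    · filter_upwards [hmtop.eventually (eventually_ge_atTop 1)] with k hk
      have hmk : (0 : ℝ) < (m k : ℝ) := by exact_mod_cast hk
      have htk := ht0 (m k)
      rw [norm_smul, norm_inv, Real.norm_eq_abs, abs_of_pos htk, ← norm_neg,
        neg_sub]
      rw [inv_mul_eq_div, div_le_div_iff₀ htk hmk]
      simpa [mul_comm] using hPm k
  refine ⟨fun k => w (m k) + (t (m k))⁻¹ • (xb - x k), ?_, ?_⟩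
  · intro k
    set T := t (m k) with hT
    have hTpos : 0 < T := ht0 (m k)
    set d : X := w (m k) + T⁻¹ • (xb - x k) with hd
    have hy : xb + T • w (m k) ∈ Ω := hmem (m k)
    have hTd : T • d = (xb + T • w (m k)) - x k := by
      rw [hd, smul_add, smul_inv_smul₀ hTpos.ne']
      abel
    refine ⟨fun j => T / (j + 1), fun _ => d, ?_, ?_, tendsto_const_nhds, ?_⟩
    · intro j; positivity
    · have : Tendsto (fun j : ℕ => T * (1 / (j + 1 : ℝ))) atTop (𝓝 (T * 0)) :=
        tendsto_const_nhds.mul tendsto_one_div_add_atTop_nhds_zero_nat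
      simpa [div_eq_mul_inv, mul_zero] using this
    · intro j
      have hs : (1 / (j + 1 : ℝ)) ∈ Set.Icc (0 : ℝ) 1 := by
        constructor
        · positivity
        · rw [div_le_one (by positivity)]; linarith [(Nat.cast_nonneg j : (0:ℝ) ≤ j)]
      have key : T / (j + 1 : ℝ) = (1 / (j + 1 : ℝ)) * T := by ring
      show x k + (T / (j + 1 : ℝ)) • d ∈ Ω
      rw [key, mul_smul, hTd]
      exact hconv.add_smul_sub_mem (hx k) hy hs
  · have := (hwlim.comp hmtop).add hsec
    simpa using this
end

section
/- Let X be a Hilbert space, Ω ⊆ X a closed convex set, x̄ ∈ Ω, and v ∈ T(x̄; Ω) (the contingent cone). Then for every ε > 0 there exists δ > 0 such that for all x ∈ Ω with ‖x − x̄‖ ≤ δ one has dist(v, T(x; Ω)) ≤ ε (i.e., v ∈ T(x; Ω) + ε B_X). -/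
open Filter Topology

/-- Hilbert-space stability of contingent directions for closed convex sets: if
`v ∈ T(xb;Ω)` then for every `ε > 0` there is `δ > 0` such that `v ∈ T(x;Ω) + ε B_X`
for all `x ∈ Ω` with `‖x − xb‖ ≤ δ`. -/
theorem contingent_cone_stability {X : Type*} [NormedAddCommGroup X] [InnerProductSpace ℝ X]
    [CompleteSpace X] {Ω : Set X} (hcl : IsClosed Ω) (hconv : Convex ℝ Ω)
    {xb : X} (hxb : xb ∈ Ω) {v : X} (hv : v ∈ Contingent Ω xb) :
    ∀ ε > (0 : ℝ), ∃ δ > (0 : ℝ), ∀ x ∈ Ω, ‖x - xb‖ ≤ δ →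
      ∃ w ∈ Contingent Ω x, ‖v - w‖ ≤ ε := by
  intro ε hε
  obtain ⟨t, w, htpos, ht0, hwv, hmem⟩ := hv
  -- choose k with ‖w k − v‖ ≤ ε/2
  have h2 : (0 : ℝ) < ε / 2 := by linarith
  have : ∀ᶠ k in atTop, ‖w k - v‖ < ε / 2 := by
    have := (hwv.sub_const v).norm
    simpa using this.eventually (gt_mem_nhds (by simpa using h2))
  obtain ⟨k, hk⟩ := this.exists
  refine ⟨t k * (ε / 2), mul_pos (htpos k) h2, ?_⟩
  intro x hx hxδ
  set u : X := w k + (t k)⁻¹ • (xb - x) with hu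
  have htk := htpos k
  have hy : xb + t k • w k ∈ Ω := hmem k
  refine ⟨u, ⟨fun j => t k / (j + 1), fun _ => u, ?_, ?_, tendsto_const_nhds, ?_⟩, ?_⟩
  · intro j
    positivity
  · have : Tendsto (fun j : ℕ => t k * (1 / (j + 1))) atTop (𝓝 (t k * 0)) :=
      tendsto_const_nhds.mul tendsto_one_div_add_atTop_nhds_zero_nat
    simpa [div_eq_mul_inv, one_div] using this
  · intro j
    have hj : (0 : ℝ) < (j : ℝ) + 1 := by positivity
    have key : x + (t k / (j + 1)) • u
        = (1 - 1 / ((j : ℝ) + 1)) • x + (1 / ((j : ℝ) + 1)) • (xb + t k • w k) := by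
      rw [hu]
      match_scalars <;> field_simp <;> ring
    rw [key]
    exact hconv hx hy (sub_nonneg.mpr (by rw [div_le_one hj]; linarith))
      (by positivity) (by field_simp; ring)
  · have : v - u = (v - w k) - (t k)⁻¹ • (xb - x) := by rw [hu]; abel
    rw [this]
    have h1 : ‖v - w k‖ ≤ ε / 2 := by
      rw [← norm_neg]; simpa using hk.le
    have h2' : ‖(t k)⁻¹ • (xb - x)‖ ≤ ε / 2 := by
      rw [norm_smul, Real.norm_eq_abs, abs_of_pos (inv_pos.mpr htk)]
      have : ‖xb - x‖ ≤ t k * (ε / 2) := by rw [← norm_neg]; simpa using hxδ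
      calc (t k)⁻¹ * ‖xb - x‖ ≤ (t k)⁻¹ * (t k * (ε / 2)) := by
            exact mul_le_mul_of_nonneg_left this (le_of_lt (inv_pos.mpr htk))
        _ = ε / 2 := by field_simp
    calc ‖(v - w k) - (t k)⁻¹ • (xb - x)‖ ≤ ‖v - w k‖ + ‖(t k)⁻¹ • (xb - x)‖ :=
          norm_sub_le _ _
      _ ≤ ε / 2 + ε / 2 := add_le_add h1 h2'
      _ = ε := by ring
end

section
/- Let f : X → Y be strictly differentiable at x̄ with derivative ∇f(x̄), let Ω ⊆ X be closed, (x̄, f(x̄)) ∈ gph f|_Ω, ε ≥ 0, and c := ‖∇f(x̄)‖ + 1. Then for every γ > 0 there exists δ > 0 (independent of ε) such that for every (x, y) ∈ gph f|_Ω with ‖x − x̄‖ ≤ δ and ‖y − f(x̄)‖ ≤ δ, the implication holds: if (x*, −y*) ∈ N̂_ε((x, y); gph f|_Ω), then x* − ∇f(x̄)* y* ∈ N̂_{(c+γ)ε + ‖y*‖γ}(x; Ω). -/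
open Filter Topology NormedSpace

/-- `ε`-normals on a single space. -/
def IsEpsNormal {X : Type*} [NormedAddCommGroup X] [NormedSpace ℝ X]
    (Ω : Set X) (xb : X) (ε : ℝ) (f : StrongDual ℝ X) : Prop :=
  ∀ γ > (0 : ℝ), ∃ δ > (0 : ℝ), ∀ x ∈ Ω, ‖x - xb‖ < δ →
    f (x - xb) ≤ (ε + γ) * ‖x - xb‖

/-- `ε`-normals to a subset of `X × Y` w.r.t. the sum norm; the functional is the pair
`(f, g) : (u, v) ↦ f u + g v`. -/
def IsEpsNormalProd {X Y : Type*} [NormedAddCommGroup X] [NormedSpace ℝ X]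
    [NormedAddCommGroup Y] [NormedSpace ℝ Y]
    (C : Set (X × Y)) (p : X × Y) (ε : ℝ) (f : StrongDual ℝ X) (g : StrongDual ℝ Y) : Prop :=
  ∀ γ > (0 : ℝ), ∃ δ > (0 : ℝ), ∀ q ∈ C, ‖q.1 - p.1‖ + ‖q.2 - p.2‖ < δ →
    f (q.1 - p.1) + g (q.2 - p.2) ≤ (ε + γ) * (‖q.1 - p.1‖ + ‖q.2 - p.2‖)

/-- Lemma on `ε`-normals to graphs of strictly differentiable mappings over a closed set:
if `(x*, −y*) ∈ N̂_ε((x,y); gph f|_Ω)` near `(xb, f xb)`, then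
`x* − ∇f(xb)* y* ∈ N̂_{(c+γ)ε + ‖y*‖γ}(x; Ω)` with `c = ‖∇f(xb)‖ + 1`,
where `δ` is independent of `ε`. -/
theorem epsNormal_graph_strict_diff {X Y : Type*}
    [NormedAddCommGroup X] [NormedSpace ℝ X] [CompleteSpace X]
    [NormedAddCommGroup Y] [NormedSpace ℝ Y] [CompleteSpace Y]
    (f : X → Y) (xb : X) (A : X →L[ℝ] Y) (hdiff : HasStrictFDerivAt f A xb)
    (Ω : Set X) (hΩ : IsClosed Ω) (hxb : xb ∈ Ω) :
    ∀ γ > (0 : ℝ), ∃ δ > (0 : ℝ), ∀ ε : ℝ, 0 ≤ ε →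
      ∀ x ∈ Ω, ‖x - xb‖ ≤ δ → ‖f x - f xb‖ ≤ δ →
      ∀ (xstar : StrongDual ℝ X) (ystar : StrongDual ℝ Y),
        IsEpsNormalProd {p : X × Y | p.1 ∈ Ω ∧ p.2 = f p.1} (x, f x) ε xstar (-ystar) →
        IsEpsNormal Ω x ((‖A‖ + 1 + γ) * ε + ‖ystar‖ * γ) (xstar - ystar.comp A) := by
  intro γ hγ
  have hcγ : (0:ℝ) < ‖A‖ + 1 + γ := by positivity
  have h := hdiff.isLittleO.def hγ
  rw [Metric.eventually_nhds_iff] at h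
  obtain ⟨δs, hδs, hest⟩ := h
  refine ⟨δs / 2, by positivity, ?_⟩
  intro ε hε x hxΩ hxδ _ xstar ystar hN γ₂ hγ₂
  obtain ⟨δ₁, hδ₁, hB⟩ := hN (γ₂ / (‖A‖ + 1 + γ)) (by positivity)
  refine ⟨min (δs / 2) (δ₁ / (‖A‖ + 1 + γ)), lt_min (by positivity) (by positivity), ?_⟩
  intro u huΩ hud
  have hux1 : ‖u - x‖ < δ₁ / (‖A‖ + 1 + γ) := lt_of_lt_of_le hud (min_le_right _ _)
  have hux2 : ‖u - x‖ < δs / 2 := lt_of_lt_of_le hud (min_le_left _ _)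
  have hub : ‖u - xb‖ < δs := by
    calc ‖u - xb‖ = ‖(u - x) + (x - xb)‖ := by rw [sub_add_sub_cancel]
    _ ≤ ‖u - x‖ + ‖x - xb‖ := norm_add_le _ _
    _ < δs / 2 + δs / 2 := by
        apply add_lt_add_of_lt_of_le hux2 hxδ
    _ = δs := by ring
  have hxbb : ‖x - xb‖ < δs := lt_of_le_of_lt hxδ (by linarith)
  have hstrict : ‖f u - f x - A (u - x)‖ ≤ γ * ‖u - x‖ := by
    have := hest (y := (u, x)) ?_
    · simpa using this
    · rw [Prod.dist_eq, dist_eq_norm, dist_eq_norm]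
      exact max_lt hub hxbb
  have hfu : ‖f u - f x‖ ≤ (‖A‖ + γ) * ‖u - x‖ := by
    calc ‖f u - f x‖ = ‖(f u - f x - A (u - x)) + A (u - x)‖ := by rw [sub_add_cancel]
    _ ≤ ‖f u - f x - A (u - x)‖ + ‖A (u - x)‖ := norm_add_le _ _
    _ ≤ γ * ‖u - x‖ + ‖A‖ * ‖u - x‖ := add_le_add hstrict (A.le_opNorm _)
    _ = (‖A‖ + γ) * ‖u - x‖ := by ring
  have hsum : ‖u - x‖ + ‖f u - f x‖ ≤ (‖A‖ + 1 + γ) * ‖u - x‖ := by linarith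
  have hsumδ : ‖u - x‖ + ‖f u - f x‖ < δ₁ := by
    calc ‖u - x‖ + ‖f u - f x‖ ≤ (‖A‖ + 1 + γ) * ‖u - x‖ := hsum
    _ < (‖A‖ + 1 + γ) * (δ₁ / (‖A‖ + 1 + γ)) := by
        exact mul_lt_mul_of_pos_left hux1 hcγ
    _ = δ₁ := by field_simp
  have hBq := hB (u, f u) ⟨huΩ, rfl⟩ hsumδ
  simp only at hBq
  have hy : ystar (f u - f x - A (u - x)) ≤ ‖ystar‖ * (γ * ‖u - x‖) := by
    calc ystar (f u - f x - A (u - x)) ≤ ‖ystar (f u - f x - A (u - x))‖ := le_abs_self _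
    _ ≤ ‖ystar‖ * ‖f u - f x - A (u - x)‖ := ystar.le_opNorm _
    _ ≤ ‖ystar‖ * (γ * ‖u - x‖) := by
        exact mul_le_mul_of_nonneg_left hstrict (norm_nonneg _)
  have hεγ : (0:ℝ) ≤ ε + γ₂ / (‖A‖ + 1 + γ) := by positivity
  have hmain : (ε + γ₂ / (‖A‖ + 1 + γ)) * (‖u - x‖ + ‖f u - f x‖)
      ≤ (ε + γ₂ / (‖A‖ + 1 + γ)) * ((‖A‖ + 1 + γ) * ‖u - x‖) :=
    mul_le_mul_of_nonneg_left hsum hεγ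
  have hexp : (ε + γ₂ / (‖A‖ + 1 + γ)) * ((‖A‖ + 1 + γ) * ‖u - x‖)
      = ((‖A‖ + 1 + γ) * ε + γ₂) * ‖u - x‖ := by
    field_simp
  have hval : (xstar - ystar.comp A) (u - x)
      = (xstar (u - x) + (-ystar) (f u - f x)) + ystar (f u - f x - A (u - x)) := by
    simp [map_sub]
    ring
  rw [hval]
  calc (xstar (u - x) + (-ystar) (f u - f x)) + ystar (f u - f x - A (u - x))
      ≤ (ε + γ₂ / (‖A‖ + 1 + γ)) * (‖u - x‖ + ‖f u - f x‖) + ‖ystar‖ * (γ * ‖u - x‖) :=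
        add_le_add hBq hy
    _ ≤ ((‖A‖ + 1 + γ) * ε + γ₂) * ‖u - x‖ + ‖ystar‖ * (γ * ‖u - x‖) := by
        rw [← hexp]; exact add_le_add_left hmain _
    _ = ((‖A‖ + 1 + γ) * ε + ‖ystar‖ * γ + γ₂) * ‖u - x‖ := by ring
end

section
/- Let S : X ⇉ Y be a set-valued mapping between Banach spaces, Θ ⊆ S(X) ⊆ Y, Ω := S⁻¹(Θ), and (x̄, ȳ) ∈ gph S with x̄ ∈ Ω, ȳ ∈ Θ. If S⁻¹ is Lipschitz-like relative to Θ around (ȳ, x̄), then S|^Θ (defined by S|^Θ(x) = S(x) ∩ Θ) is metrically regular relative to Ω around (x̄, ȳ): there exist neighborhoods V of x̄, W of ȳ and κ ≥ 0 such that d(x', (S|^Θ)⁻¹(y)) ≤ κ d(y, S|^Θ(x')) for all x' ∈ Ω ∩ V and y ∈ Θ ∩ W. -/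
open Filter Topology

/-- `C` is closed around `p`. -/
def ClosedAround {Z : Type*} [TopologicalSpace Z] (C : Set Z) (p : Z) : Prop :=
  ∃ U : Set Z, IsClosed U ∧ p ∈ interior U ∧ IsClosed (C ∩ U)

/-- Lipschitz-like property of a multifunction `F : Y ⇉ X` relative to a set `Θ ⊆ Y`
around `(yb, xb)` with constant `κ`. -/
def LipschitzLikeRel {Y X : Type*} [NormedAddCommGroup Y] [NormedSpace ℝ Y]
    [NormedAddCommGroup X] [NormedSpace ℝ X]
    (F : Y → Set X) (Θ : Set Y) (yb : Y) (xb : X) (κ : ℝ) : Prop :=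
  ∃ W ∈ 𝓝 yb, ∃ V ∈ 𝓝 xb, ∀ y ∈ Θ ∩ W, ∀ y' ∈ Θ ∩ W, ∀ x ∈ F y' ∩ V,
    ∃ z ∈ F y, ‖x - z‖ ≤ κ * ‖y' - y‖

/-- If `S⁻¹` is Lipschitz-like relative to `Θ` around `(yb, xb)`, then `S|^Θ` is
metrically regular relative to `Ω = S⁻¹(Θ)` around `(xb, yb)`:
`d(x', (S|^Θ)⁻¹(y)) ≤ κ d(y, S|^Θ(x'))` for `x' ∈ Ω ∩ V`, `y ∈ Θ ∩ W`. -/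
theorem relative_metric_regularity {X Y : Type*}
    [NormedAddCommGroup X] [NormedSpace ℝ X] [CompleteSpace X]
    [NormedAddCommGroup Y] [NormedSpace ℝ Y] [CompleteSpace Y]
    {S : X → Set Y} {Θ : Set Y} {xb : X} {yb : Y}
    (hrange : Θ ⊆ ⋃ x, S x) (hΘcl : IsClosed Θ) (hΘconv : Convex ℝ Θ)
    (hmem : yb ∈ S xb ∩ Θ)
    (hcl : ClosedAround {p : X × Y | p.2 ∈ S p.1} (xb, yb))
    (hLip : ∃ κ ≥ (0 : ℝ), LipschitzLikeRel (fun y => {x | y ∈ S x}) Θ yb xb κ) :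
    ∃ κ ≥ (0 : ℝ), ∃ V ∈ 𝓝 xb, ∃ W ∈ 𝓝 yb,
      ∀ x', (S x' ∩ Θ).Nonempty → x' ∈ V → ∀ y ∈ Θ ∩ W,
        EMetric.infEdist x' {x | y ∈ S x ∩ Θ} ≤
          ENNReal.ofReal κ * EMetric.infEdist y (S x' ∩ Θ) := by
  obtain ⟨κ, hκ, W, hW, V, hV, hLL⟩ := hLip
  obtain ⟨ρ₁, hρ₁, hWb⟩ := Metric.mem_nhds_iff.mp hW
  obtain ⟨ρ₂, hρ₂, hVb⟩ := Metric.mem_nhds_iff.mp hV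
  set ρ := min ρ₁ ρ₂ with hρdef
  have hρ : 0 < ρ := lt_min hρ₁ hρ₂
  have hWb' : Metric.ball yb ρ ⊆ W := (Metric.ball_subset_ball (min_le_left _ _)).trans hWb
  have hVb' : Metric.ball xb ρ ⊆ V := (Metric.ball_subset_ball (min_le_right _ _)).trans hVb
  refine ⟨κ + 1, by linarith, Metric.ball xb (ρ/4), Metric.ball_mem_nhds _ (by linarith),
    Metric.ball yb (ρ/4), Metric.ball_mem_nhds _ (by linarith), ?_⟩
  intro x' hne hx' y hy
  have hyΘ : y ∈ Θ := hy.1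
  have hyW : y ∈ W := hWb' (Metric.ball_subset_ball (by linarith) hy.2)
  have hset : {x | y ∈ S x ∩ Θ} = {x | y ∈ S x} := by
    ext x; simp [Set.mem_setOf_eq, hyΘ]
  rw [hset]
  set D := EMetric.infEdist y (S x' ∩ Θ) with hD
  have hDlt : D < ⊤ := lt_top_iff_ne_top.mpr (Metric.infEdist_ne_top hne)
  by_cases hcase : D < ENNReal.ofReal (ρ/4)
  · -- small case
    have key : EMetric.infEdist x' {x | y ∈ S x} ≤ ENNReal.ofReal κ * D := by
      refine ENNReal.le_of_forall_pos_le_add fun ε hε _ => ?_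
      set δ := min (ρ/8) ((ε : ℝ)/(κ+1)) with hδdef
      have hδpos : 0 < δ := lt_min (by linarith) (div_pos hε (by linarith))
      have hDlt' : D < D + ENNReal.ofReal δ :=
        ENNReal.lt_add_right hDlt.ne (by simp [ENNReal.ofReal_pos, hδpos])
      obtain ⟨y', hy'T, hy'd⟩ := EMetric.infEdist_lt_iff.mp hDlt'
      have hdist : dist y y' < ρ/4 + δ := by
        have : edist y y' < ENNReal.ofReal (ρ/4 + δ) := by
          rw [ENNReal.ofReal_add (by linarith) hδpos.le]
          exact hy'd.trans_le (add_le_add_left hcase.le _)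
        rwa [edist_dist, ENNReal.ofReal_lt_ofReal_iff (by linarith)] at this
      have hy'W : y' ∈ W := by
        apply hWb'
        have h1 : dist y' yb ≤ dist y' y + dist y yb := dist_triangle _ _ _
        have h2 : dist y yb < ρ/4 := hy.2
        have h3 : δ ≤ ρ/8 := min_le_left _ _
        rw [Metric.mem_ball]
        rw [dist_comm] at hdist
        linarith
      have hx'V : x' ∈ V := hVb' (Metric.ball_subset_ball (by linarith) hx')
      obtain ⟨z, hz, hzd⟩ := hLL y ⟨hyΘ, hyW⟩ y' ⟨hy'T.2, hy'W⟩ x' ⟨hy'T.1, hx'V⟩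
      have h1 : EMetric.infEdist x' {x | y ∈ S x} ≤ edist x' z :=
        EMetric.infEdist_le_edist_of_mem hz
      have h2 : edist x' z ≤ ENNReal.ofReal κ * edist y y' := by
        rw [edist_dist, dist_eq_norm, edist_dist, dist_eq_norm, ← ENNReal.ofReal_mul hκ]
        apply ENNReal.ofReal_le_ofReal
        calc ‖x' - z‖ ≤ κ * ‖y' - y‖ := hzd
          _ = κ * ‖y - y'‖ := by rw [norm_sub_rev]
      calc EMetric.infEdist x' {x | y ∈ S x} ≤ ENNReal.ofReal κ * edist y y' := h1.trans h2
        _ ≤ ENNReal.ofReal κ * (D + ENNReal.ofReal δ) :=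
            mul_le_mul_right hy'd.le _
        _ = ENNReal.ofReal κ * D + ENNReal.ofReal κ * ENNReal.ofReal δ := by ring
        _ ≤ ENNReal.ofReal κ * D + ε := by
            gcongr
            rw [← ENNReal.ofReal_mul hκ, ← ENNReal.ofReal_coe_nnreal]
            apply ENNReal.ofReal_le_ofReal
            have h3 : δ ≤ (ε : ℝ)/(κ+1) := min_le_right _ _
            calc κ * δ ≤ κ * ((ε : ℝ)/(κ+1)) := by
                  apply mul_le_mul_of_nonneg_left h3 hκ
              _ ≤ (κ+1) * ((ε : ℝ)/(κ+1)) := by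
                  apply mul_le_mul_of_nonneg_right (by linarith)
                  positivity
              _ = (ε : ℝ) := by field_simp
    calc EMetric.infEdist x' {x | y ∈ S x} ≤ ENNReal.ofReal κ * D := key
      _ ≤ ENNReal.ofReal (κ+1) * D := by gcongr; linarith
  · -- big case
    push_neg at hcase
    have hxbV : xb ∈ V := hVb' (Metric.mem_ball_self hρ)
    have hybW : yb ∈ W := hWb' (Metric.mem_ball_self hρ)
    obtain ⟨z, hz, hzd⟩ := hLL y ⟨hyΘ, hyW⟩ yb ⟨hmem.2, hybW⟩ xb ⟨hmem.1, hxbV⟩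
    have h1 : EMetric.infEdist x' {x | y ∈ S x} ≤ edist x' z :=
      EMetric.infEdist_le_edist_of_mem hz
    have hxz : ‖x' - z‖ ≤ (κ+1) * (ρ/4) := by
      have h2 : ‖x' - z‖ ≤ ‖x' - xb‖ + ‖xb - z‖ := by
        calc ‖x' - z‖ = ‖(x' - xb) + (xb - z)‖ := by abel_nf
          _ ≤ ‖x' - xb‖ + ‖xb - z‖ := norm_add_le _ _
      have h4 : ‖x' - xb‖ < ρ/4 := by
        rw [← dist_eq_norm]; exact hx'
      have h5 : ‖xb - z‖ ≤ κ * (ρ/4) := by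
        refine hzd.trans ?_
        apply mul_le_mul_of_nonneg_left ?_ hκ
        rw [← dist_eq_norm]
        exact le_of_lt (Metric.mem_ball'.mp hy.2)
      linarith
    have h3 : edist x' z ≤ ENNReal.ofReal ((κ+1) * (ρ/4)) := by
      rw [edist_dist, dist_eq_norm]
      exact ENNReal.ofReal_le_ofReal hxz
    calc EMetric.infEdist x' {x | y ∈ S x} ≤ ENNReal.ofReal ((κ+1) * (ρ/4)) := h1.trans h3
      _ = ENNReal.ofReal (κ+1) * ENNReal.ofReal (ρ/4) := ENNReal.ofReal_mul (by linarith)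
      _ ≤ ENNReal.ofReal (κ+1) * D := mul_le_mul_right hcase _
end
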